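/- Let G be a group generated by a finite set S such that every subset of S with at most 4 elements generates a subgroup of exponent 3. Then G has exponent 3. -/

import Mathlib

open scoped commutatorElement

namespace Stmt9
open Subgroup

variable {H : Type*} [Group H]

private lemma cube_sq {a : H} (h : a ^ 3 = 1) : a * a = a⁻¹ := by
  have h' : a * a * a = 1 := by
    have e : a ^ 3 = a * a * a := by rw [pow_succ, pow_succ, pow_one]
    rwa [e] at h
  exact eq_inv_of_mul_eq_one_left h'

private lemma key1 (h3 : ∀ x : H, x ^ 3 = 1) (x y : H) :
    (y * x * y⁻¹) * x * (y⁻¹ * x * y) = 1 := by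
  have k : (y⁻¹ * x) * (y⁻¹ * x) = x⁻¹ * y := by
    rw [cube_sq (h3 (y⁻¹ * x))]; group
  calc (y * x * y⁻¹) * x * (y⁻¹ * x * y)
      = y * x * ((y⁻¹ * x) * (y⁻¹ * x)) * y := by group
    _ = y * x * (x⁻¹ * y) * y := by rw [k]
    _ = y * y * y := by group
    _ = y ^ 3 := by rw [pow_succ, pow_succ, pow_one]
    _ = 1 := h3 y

private lemma comm_conj (h3 : ∀ x : H, x ^ 3 = 1) (x y : H) :
    Commute x (y⁻¹ * x * y) := by
  have h1 := key1 h3 x y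
  have h2 := key1 h3 x y⁻¹
  rw [inv_inv] at h2
  have e1 : x * (y⁻¹ * x * y) = (y * x * y⁻¹)⁻¹ :=
    eq_inv_of_mul_eq_one_right (by simpa [mul_assoc] using h1)
  have e2 : (y⁻¹ * x * y) * x = (y * x * y⁻¹)⁻¹ :=
    eq_inv_of_mul_eq_one_left (by simpa [mul_assoc] using h2)
  exact e1.trans e2.symm

private lemma engel (h3 : ∀ x : H, x ^ 3 = 1) (x y : H) : Commute x ⁅x, y⁆ := by
  have h := comm_conj h3 x y⁻¹
  rw [inv_inv] at h
  have h2 : Commute x (y * x⁻¹ * y⁻¹) := by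
    have := h.inv_right
    simpa [mul_assoc] using this
  have h3' : Commute x (x * (y * x⁻¹ * y⁻¹)) := (Commute.refl x).mul_right h2
  simpa [commutatorElement_def, mul_assoc] using h3'


private lemma ring_magic {R : Type*} [Ring R] (Aset : Set R)
    (sq : ∀ a ∈ Aset, a * a = 0)
    (circ : ∀ a ∈ Aset, ∀ b ∈ Aset, a + b + a * b ∈ Aset)
    (tor : ∀ r : R, r + r + r = 0) :
    ∀ a ∈ Aset, ∀ b ∈ Aset, ∀ c ∈ Aset, a * b * c = 0 := by
  have S7 : ∀ a ∈ Aset, ∀ b ∈ Aset, a*b + b*a + a*b*a = 0 := by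
    intro a ha b hb
    have hA := sq a ha; have hB := sq b hb
    have h2 : (a + b + a*b) * (a + b + a*b) = 0 := sq _ (circ a ha b hb)
    have h1 : (b + a + b*a) * (b + a + b*a) = 0 := sq _ (circ b hb a ha)
    have s2 : a*b + b*a + b*a*b + a*b*a + a*b*a*b = 0 := by
      have e : a*b + b*a + b*a*b + a*b*a + a*b*a*b
          = (a + b + a*b) * (a + b + a*b) - (a*a + (a*a)*b + b*b + a*(b*b)) := by noncomm_ring
      rw [e, h2, hA, hB]; noncomm_ring
    have s1 : a*b + b*a + a*b*a + b*a*b + b*a*b*a = 0 := by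
      have e : a*b + b*a + a*b*a + b*a*b + b*a*b*a
          = (b + a + b*a) * (b + a + b*a) - (b*b + (b*b)*a + a*a + b*(a*a)) := by noncomm_ring
      rw [e, h1, hA, hB]; noncomm_ring
    have s4 : a*b*a + b*a*b*a = 0 := by
      have e : a*b*a + b*a*b*a
          = (a*b + b*a + a*b*a + b*a*b + b*a*b*a) * a - (b*(a*a) + a*b*(a*a) + b*a*b*(a*a)) := by noncomm_ring
      rw [e, s1, hA]; noncomm_ring
    have s5 : b*a*b + a*b*a*b = 0 := by
      have e : b*a*b + a*b*a*b
          = (a*b + b*a + b*a*b + a*b*a + a*b*a*b) * b - (a*(b*b) + b*a*(b*b) + a*b*a*(b*b)) := by noncomm_ring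
      rw [e, s2, hB]; noncomm_ring
    have e : a*b + b*a + a*b*a = (a*b + b*a + b*a*b + a*b*a + a*b*a*b) - (b*a*b + a*b*a*b) := by noncomm_ring
    rw [e, s2, s5]; noncomm_ring
  have T3 : ∀ a ∈ Aset, ∀ b ∈ Aset, ∀ c ∈ Aset, c*(b*a) = -(a*(c*b)) := by
    intro a ha b hb c hc
    have hA := sq a ha
    have t0 := S7 a ha _ (circ c hc b hb)
    have t1 : a*(c*b) + (c*b)*a + a*(c*b)*a = 0 := by
      have e : a*(c*b) + (c*b)*a + a*(c*b)*a
          = (a*(c + b + c*b) + (c + b + c*b)*a + a*(c + b + c*b)*a)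
            - (a*b + b*a + a*b*a) - (a*c + c*a + a*c*a) := by noncomm_ring
      rw [e, t0, S7 a ha b hb, S7 a ha c hc]; noncomm_ring
    have t2 : a*(c*b)*a = 0 := by
      have e : a*(c*b)*a = a*(a*(c*b) + (c*b)*a + a*(c*b)*a) - ((a*a)*(c*b) + (a*a)*((c*b)*a)) := by noncomm_ring
      rw [e, t1, hA]; noncomm_ring
    have t4 : a*(c*b) + c*(b*a) = 0 := by
      have e : a*(c*b) + c*(b*a) = (a*(c*b) + (c*b)*a + a*(c*b)*a) - (a*(c*b)*a) := by noncomm_ring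
      rw [e, t1, t2]; noncomm_ring
    exact eq_neg_of_add_eq_zero_right t4
  intro a ha b hb c hc
  have e1 : a*(b*c) = -(c*(a*b)) := T3 c hc b hb a ha
  have e2 : c*(a*b) = -(b*(c*a)) := T3 b hb a ha c hc
  have e3 : b*(c*a) = -(a*(b*c)) := T3 a ha c hc b hb
  have E : a*(b*c) = -(a*(b*c)) := by
    calc a*(b*c) = -(c*(a*b)) := e1
      _ = -(-(b*(c*a))) := by rw [e2]
      _ = b*(c*a) := neg_neg _
      _ = -(a*(b*c)) := e3
  have h2' : a*(b*c) + a*(b*c) = 0 := add_eq_zero_iff_eq_neg.mpr E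
  have h3' := tor (a*(b*c))
  rw [h2', zero_add] at h3'
  rw [mul_assoc, h3']

private theorem gamma4 (h3 : ∀ x : H, x ^ 3 = 1) (x y z w : H) :
    ⁅⁅⁅x, y⁆, z⁆, w⁆ = 1 := by
  classical
  set Mset : Set H := Set.range fun g : H => g⁻¹ * x * g with hMsetdef
  set M : Subgroup H := Subgroup.closure Mset with hMdef
  have hxM : x ∈ M := Subgroup.subset_closure ⟨1, by simp⟩
  have hMconj : ∀ g : H, ∀ m ∈ M, g⁻¹ * m * g ∈ M := by
    intro g m hm
    induction hm using Subgroup.closure_induction with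
    | mem a ha =>
      obtain ⟨k, rfl⟩ := ha
      exact Subgroup.subset_closure ⟨k * g, by group⟩
    | one => simpa using one_mem M
    | mul a b _ _ pa pb =>
      have e : g⁻¹ * (a * b) * g = (g⁻¹ * a * g) * (g⁻¹ * b * g) := by group
      rw [e]; exact mul_mem pa pb
    | inv a _ pa =>
      have e : g⁻¹ * a⁻¹ * g = (g⁻¹ * a * g)⁻¹ := by group
      rw [e]; exact inv_mem pa
  have hMsetcomm : ∀ a ∈ Mset, ∀ b ∈ Mset, Commute a b := by
    rintro _ ⟨g, rfl⟩ _ ⟨k, rfl⟩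
    have base := comm_conj h3 x (k * g⁻¹)
    have hmap := base.map (MulAut.conj g⁻¹).toMonoidHom
    have e1 : (MulAut.conj g⁻¹).toMonoidHom x = g⁻¹ * x * g := by
      simp [MulAut.conj_apply]
    have e2 : (MulAut.conj g⁻¹).toMonoidHom ((k * g⁻¹)⁻¹ * x * (k * g⁻¹)) = k⁻¹ * x * k := by
      simp [MulAut.conj_apply, mul_assoc]
    rwa [e1, e2] at hmap
  have hMcommL : ∀ a ∈ Mset, ∀ b ∈ M, Commute a b := by
    intro a ha b hb
    induction hb using Subgroup.closure_induction with
    | mem c hc => exact hMsetcomm a ha c hc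
    | one => exact Commute.one_right a
    | mul c d _ _ pc pd => exact pc.mul_right pd
    | inv c _ pc => exact pc.inv_right
  have hMcomm : ∀ a ∈ M, ∀ b ∈ M, Commute a b := by
    intro a ha b hb
    induction ha using Subgroup.closure_induction with
    | mem c hc => exact hMcommL c hc b hb
    | one => exact Commute.one_left b
    | mul c d _ _ pc pd => exact pc.mul_left pd
    | inv c _ pc => exact pc.inv_left
  letI : CommGroup ↥M :=
    { (inferInstance : Group ↥M) with
      mul_comm := fun a b => Subtype.ext ((hMcomm a.1 a.2 b.1 b.2).eq) }
  -- conjugation monoid homs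
  let e : H → (↥M →* ↥M) := fun g =>
    { toFun := fun m => ⟨g⁻¹ * ↑m * g, hMconj g ↑m m.2⟩
      map_one' := Subtype.ext (by simp)
      map_mul' := fun m n => Subtype.ext (by
        show g⁻¹ * (↑m * ↑n) * g = (g⁻¹ * ↑m * g) * (g⁻¹ * ↑n * g)
        group) }
  let τ : H → Module.End ℤ (Additive ↥M) := fun g => (MonoidHom.toAdditive (e g)).toIntLinearMap
  let A : H → Module.End ℤ (Additive ↥M) := fun g => τ g - 1
  have hτapp : ∀ (g : H) (v : Additive ↥M),
      τ g v = Additive.ofMul (e g (Additive.toMul v)) := fun _ _ => rfl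
  have coe_em : ∀ (g : H) (m : ↥M), ((e g m : ↥M) : H) = g⁻¹ * ↑m * g := fun _ _ => rfl
  have hτcomp : ∀ g k : H, τ g * τ k = τ (k * g) := by
    intro g k
    apply LinearMap.ext; intro v
    rw [Module.End.mul_apply, hτapp, hτapp, hτapp]
    apply congrArg Additive.ofMul
    apply Subtype.ext
    simp only [toMul_ofMul, coe_em]
    group
  have hAsq : ∀ g : H, A g * A g = 0 := by
    intro g
    apply LinearMap.ext; intro v
    have expand : (A g * A g) v = τ g (τ g v) - τ g v - (τ g v - v) := by
      simp only [A, Module.End.mul_apply, LinearMap.sub_apply, Module.End.one_apply, map_sub]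
    rw [expand]
    set m : ↥M := Additive.toMul v with hmv
    set n : ↥M := e g m with hn
    set p : ↥M := e g n with hp
    have hgrp : m * n * p = 1 := by
      apply Subtype.ext
      push_cast [hn, hp, coe_em]
      calc (↑m * (g⁻¹ * ↑m * g) * (g⁻¹ * (g⁻¹ * ↑m * g) * g) : H)
          = g⁻¹ * (((g * ↑m * g⁻¹) * ↑m * (g⁻¹ * ↑m * g))) * g := by group
        _ = g⁻¹ * 1 * g := by rw [key1 h3 (↑m) g]
        _ = 1 := by group
    have hcube : n * n * n = 1 := by
      apply Subtype.ext
      push_cast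
      have := h3 (n : H)
      rw [pow_succ, pow_succ, pow_one] at this
      exact this
    -- additive versions
    have h1' : (Additive.ofMul m) + (Additive.ofMul n) + (Additive.ofMul p) = 0 := by
      have := congrArg Additive.ofMul hgrp
      simpa using this
    have h2' : (Additive.ofMul n) + (Additive.ofMul n) + (Additive.ofMul n) = 0 := by
      have := congrArg Additive.ofMul hcube
      simpa using this
    have hv : v = Additive.ofMul m := rfl
    have hτv : τ g v = Additive.ofMul n := rfl
    have hττv : τ g (τ g v) = Additive.ofMul p := by rw [hτv]; rfl
    rw [hττv, hτv, hv]
    have hpeq : Additive.ofMul p = -(Additive.ofMul m) - Additive.ofMul n := by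
      have : (Additive.ofMul m + Additive.ofMul n) + Additive.ofMul p = 0 := by
        simpa [add_assoc] using h1'
      have := eq_neg_of_add_eq_zero_right this
      rw [this]; abel
    rw [hpeq, LinearMap.zero_apply]
    have : -Additive.ofMul m - Additive.ofMul n - Additive.ofMul n -
        (Additive.ofMul n - Additive.ofMul m)
        = -(Additive.ofMul n + Additive.ofMul n + Additive.ofMul n) := by abel
    rw [this, h2', neg_zero]
  have htor : ∀ f : Module.End ℤ (Additive ↥M), f + f + f = 0 := by
    intro f
    apply LinearMap.ext; intro v
    simp only [LinearMap.add_apply, LinearMap.zero_apply]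
    set u : Additive ↥M := f v
    have hcube : (Additive.toMul u) * (Additive.toMul u) * (Additive.toMul u) = 1 := by
      apply Subtype.ext
      push_cast
      have := h3 ((Additive.toMul u : ↥M) : H)
      rw [pow_succ, pow_succ, pow_one] at this
      exact this
    have := congrArg Additive.ofMul hcube
    simpa using this
  have hAcirc : ∀ g k : H, A g + A k + A g * A k = A (k * g) := by
    intro g k
    have h := hτcomp g k
    simp only [A]
    rw [← h]
    noncomm_ring
  have triple : ∀ g k l : H, A g * A k * A l = 0 := by
    intro g k l
    refine ring_magic (Set.range A) ?_ ?_ htor (A g) ⟨g, rfl⟩ (A k) ⟨k, rfl⟩ (A l) ⟨l, rfl⟩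
    · rintro _ ⟨g', rfl⟩; exact hAsq g'
    · rintro _ ⟨g', rfl⟩ _ ⟨k', rfl⟩; exact ⟨k' * g', (hAcirc g' k').symm⟩
  -- translation to commutators
  have Fstep : ∀ (m : ↥M) (z : H), ⁅(↑m : H), z⁆ = ↑(m * (e z⁻¹ m)⁻¹) := by
    intro m z
    push_cast [coe_em]
    rw [commutatorElement_def]
    group
  have Fadd : ∀ (m : ↥M) (z : H),
      Additive.ofMul (m * (e z⁻¹ m)⁻¹) = -(A z⁻¹ (Additive.ofMul m)) := by
    intro m z
    have : Additive.ofMul (m * (e z⁻¹ m)⁻¹)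
        = Additive.ofMul m - Additive.ofMul (e z⁻¹ m) := by simp [sub_eq_add_neg]
    rw [this]
    have : A z⁻¹ (Additive.ofMul m) = Additive.ofMul (e z⁻¹ m) - Additive.ofMul m := by
      simp only [A, LinearMap.sub_apply, Module.End.one_apply, hτapp]
      simp
    rw [this]; abel
  set m0 : ↥M := ⟨x, hxM⟩ with hm0
  set m1 : ↥M := m0 * (e y⁻¹ m0)⁻¹ with hm1
  set m2 : ↥M := m1 * (e z⁻¹ m1)⁻¹ with hm2
  set m3 : ↥M := m2 * (e w⁻¹ m2)⁻¹ with hm3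
  have hc1 : ⁅x, y⁆ = ↑m1 := Fstep m0 y
  have hc2 : ⁅⁅x, y⁆, z⁆ = ↑m2 := by rw [hc1]; exact Fstep m1 z
  have hc3 : ⁅⁅⁅x, y⁆, z⁆, w⁆ = ↑m3 := by rw [hc2]; exact Fstep m2 w
  have a1 : Additive.ofMul m1 = -(A y⁻¹ (Additive.ofMul m0)) := Fadd m0 y
  have a2 : Additive.ofMul m2 = (A z⁻¹ * A y⁻¹) (Additive.ofMul m0) := by
    have h := Fadd m1 z
    rw [← hm2] at h
    rw [h, a1, map_neg, neg_neg, Module.End.mul_apply]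
  have a3 : Additive.ofMul m3 = 0 := by
    have h := Fadd m2 w
    rw [← hm3] at h
    rw [h, a2]
    have e4 : A w⁻¹ ((A z⁻¹ * A y⁻¹) (Additive.ofMul m0))
        = (A w⁻¹ * A z⁻¹ * A y⁻¹) (Additive.ofMul m0) := by
      simp [Module.End.mul_apply]
    rw [e4, triple w⁻¹ z⁻¹ y⁻¹, LinearMap.zero_apply, neg_zero]
  have hm3one : m3 = 1 := by
    have := congrArg Additive.toMul a3
    simpa using this
  rw [hc3, hm3one]
  simp

-- ===== class-three commutator algebra =====
-- pure group identities
private lemma gid1 (a b c : H) : ⁅a*b, c⁆ = a * ⁅b,c⁆ * a⁻¹ * ⁅a,c⁆ := by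
  simp only [commutatorElement_def]; group
private lemma gid2 (a b c : H) : ⁅a, b*c⁆ = ⁅a,b⁆ * (b * ⁅a,c⁆ * b⁻¹) := by
  simp only [commutatorElement_def]; group
private lemma gid3 (a b : H) : ⁅a⁻¹, b⁆ = a⁻¹ * ⁅b,a⁆ * a := by
  simp only [commutatorElement_def]; group
private lemma gid4 (a b : H) : ⁅a, b⁻¹⁆ = b⁻¹ * ⁅b,a⁆ * b := by
  simp only [commutatorElement_def]; group
private lemma gid5 (g a zz : H) : ⁅g*a*g⁻¹, zz⁆ = g * ⁅a, g⁻¹*zz*g⁆ * g⁻¹ := by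
  simp only [commutatorElement_def]; group

private lemma central_conj {c : H} (hz : ∀ d, Commute c d) (g : H) : g * c * g⁻¹ = c := by
  rw [(hz g).symm.eq, mul_assoc, mul_inv_cancel, mul_one]

section ClassThree

private lemma Tmul3 (hc : ∀ a b c d : H, Commute ⁅⁅a,b⁆,c⁆ d) (a b zz w : H) : ⁅⁅a,b⁆, zz*w⁆ = ⁅⁅a,b⁆,zz⁆ * ⁅⁅a,b⁆,w⁆ := by
  rw [gid2, central_conj (hc a b w) zz]

private lemma Tinv3 (hc : ∀ a b c d : H, Commute ⁅⁅a,b⁆,c⁆ d) (a b zz : H) : ⁅⁅a,b⁆, zz⁻¹⁆ = ⁅⁅a,b⁆,zz⁆⁻¹ := by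
  have h : ⁅⁅a,b⁆, zz⁆ * ⁅⁅a,b⁆, zz⁻¹⁆ = 1 := by
    rw [← Tmul3 hc, mul_inv_cancel, commutatorElement_one_right]
  exact (inv_eq_of_mul_eq_one_right h).symm

private lemma Tgamma2 (hc : ∀ a b c d : H, Commute ⁅⁅a,b⁆,c⁆ d) (a b p q : H) : ⁅⁅a,b⁆, ⁅p,q⁆⁆ = 1 := by
  rw [commutatorElement_def p q, Tmul3 hc, Tmul3 hc, Tmul3 hc, Tinv3 hc, Tinv3 hc]
  rw [← commutatorElement_def]
  exact commutatorElement_eq_one_iff_commute.mpr (hc a b p _)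

private lemma Tconj3 (hc : ∀ a b c d : H, Commute ⁅⁅a,b⁆,c⁆ d) (a b g zz : H) : ⁅⁅a,b⁆, g⁻¹*zz*g⁆ = ⁅⁅a,b⁆, zz⁆ := by
  have h : g⁻¹*zz*g = zz * ⁅zz⁻¹, g⁻¹⁆ := by simp only [commutatorElement_def]; group
  rw [h, Tmul3 hc, Tgamma2 hc, mul_one]

private lemma Tmul1 (hc : ∀ a b c d : H, Commute ⁅⁅a,b⁆,c⁆ d) (a1 a2 b zz : H) :
    ⁅⁅a1*a2, b⁆, zz⁆ = ⁅⁅a1,b⁆,zz⁆ * ⁅⁅a2,b⁆,zz⁆ := by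
  rw [gid1 a1 a2 b, gid1, gid5, Tconj3 hc]
  rw [central_conj (hc a1 b zz), central_conj (hc a2 b zz)]

private lemma Tmul2 (hc : ∀ a b c d : H, Commute ⁅⁅a,b⁆,c⁆ d) (a b1 b2 zz : H) :
    ⁅⁅a, b1*b2⁆, zz⁆ = ⁅⁅a,b1⁆,zz⁆ * ⁅⁅a,b2⁆,zz⁆ := by
  rw [gid2 a b1 b2, gid1, gid5, Tconj3 hc]
  rw [central_conj (hc a b2 zz) b1, central_conj (hc a b2 zz) ⁅a,b1⁆]
  exact (hc a b2 zz _).eq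

private lemma Tone1 (b zz : H) : ⁅⁅(1:H), b⁆, zz⁆ = 1 := by
  rw [commutatorElement_one_left, commutatorElement_one_left]

private lemma Tone2 (a zz : H) : ⁅⁅a, (1:H)⁆, zz⁆ = 1 := by
  rw [commutatorElement_one_right, commutatorElement_one_left]

private lemma Tinv1 (hc : ∀ a b c d : H, Commute ⁅⁅a,b⁆,c⁆ d) (a b zz : H) : ⁅⁅a⁻¹, b⁆, zz⁆ = ⁅⁅a,b⁆,zz⁆⁻¹ := by
  have h : ⁅⁅a⁻¹,b⁆,zz⁆ * ⁅⁅a,b⁆,zz⁆ = 1 := by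
    rw [← Tmul1 hc, inv_mul_cancel, Tone1]
  exact eq_inv_of_mul_eq_one_left h

private lemma Tinv2 (hc : ∀ a b c d : H, Commute ⁅⁅a,b⁆,c⁆ d) (a b zz : H) : ⁅⁅a, b⁻¹⁆, zz⁆ = ⁅⁅a,b⁆,zz⁆⁻¹ := by
  have h : ⁅⁅a,b⁻¹⁆,zz⁆ * ⁅⁅a,b⁆,zz⁆ = 1 := by
    rw [← Tmul2 hc, inv_mul_cancel, Tone2]
  exact eq_inv_of_mul_eq_one_left h

private lemma Tswap (hc : ∀ a b c d : H, Commute ⁅⁅a,b⁆,c⁆ d) (a b zz : H) : ⁅⁅b,a⁆, zz⁆ = ⁅⁅a,b⁆,zz⁆⁻¹ := by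
  have hba : ⁅b,a⁆ = ⁅a,b⁆⁻¹ := (commutatorElement_inv a b).symm
  rw [hba, gid3]
  have hcen : ∀ d, Commute ⁅zz, ⁅a,b⁆⁆ d := by
    intro d
    have : ⁅zz, ⁅a,b⁆⁆ = ⁅⁅a,b⁆,zz⁆⁻¹ := by rw [commutatorElement_inv]
    rw [this]
    exact (hc a b zz d).inv_left
  have := central_conj hcen (⁅a,b⁆⁻¹)
  rw [inv_inv] at this
  rw [this, commutatorElement_inv]

end ClassThree

private lemma symT (h3 : ∀ x : H, x ^ 3 = 1) (x y zz : H) :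
    ⁅⁅x,y⁆,zz⁆ * ⁅⁅zz,y⁆,x⁆ = 1 := by
  have hc : ∀ a b c d : H, Commute ⁅⁅a,b⁆,c⁆ d := fun a b c d =>
    commutatorElement_eq_one_iff_commute.mp (gamma4 h3 a b c d)
  have h1 : ⁅⁅x*zz, y⁆, x*zz⁆ = 1 :=
    commutatorElement_eq_one_iff_commute.mpr (engel h3 (x*zz) y).symm
  have e1 : ⁅⁅x,y⁆,x⁆ = 1 := commutatorElement_eq_one_iff_commute.mpr (engel h3 x y).symm
  have e2 : ⁅⁅zz,y⁆,zz⁆ = 1 := commutatorElement_eq_one_iff_commute.mpr (engel h3 zz y).symm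
  rw [Tmul1 hc, Tmul3 hc, Tmul3 hc, e1, e2, one_mul, mul_one] at h1
  exact h1


private lemma gid5' {H : Type*} [Group H] (g a zz : H) :
    ⁅g⁻¹*a*g, zz⁆ = g⁻¹ * ⁅a, g*zz*g⁻¹⁆ * g := by
  simp only [commutatorElement_def]; group

private lemma commAll_conj {H : Type*} [Group H] {X : H} (h : ∀ d, Commute X d) (g : H) :
    ∀ d, Commute (g * X * g⁻¹) d := by
  intro d; rw [central_conj h g]; exact h d

private lemma commAll_conj' {H : Type*} [Group H] {X : H} (h : ∀ d, Commute X d) (g : H) :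
    ∀ d, Commute (g⁻¹ * X * g) d := by
  have := commAll_conj h g⁻¹
  rwa [inv_inv] at this

private lemma central_pair_mul {H : Type*} [Group H] {x1 x2 y1 y2 : H}
    (hx2 : ∀ d, Commute x2 d) (h1 : x1 * y1 = 1) (h2 : x2 * y2 = 1) :
    (x1*x2)*(y1*y2) = 1 := by
  have e : (x1*x2)*(y1*y2) = (x1*y1)*(x2*y2) := by
    calc (x1*x2)*(y1*y2) = x1*(x2*y1)*y2 := by group
      _ = x1*(y1*x2)*y2 := by rw [(hx2 y1).eq]
      _ = (x1*y1)*(x2*y2) := by group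
  rw [e, h1, h2, one_mul]

private lemma epow {H : Type*} [Group H] (x : H) : x ^ 3 = x*x*x := by
  rw [pow_succ, pow_succ, pow_one]

end Stmt9

/-- Let `G` be a group generated by a finite set `S` such that every subset of `S`
with at most 4 elements generates a subgroup of exponent 3.  Then `G` has exponent 3. -/
theorem stmt_9 {G : Type*} [Group G] (S : Finset G)
    (hS : Subgroup.closure (S : Set G) = ⊤)
    (h4 : ∀ T ⊆ S, T.card ≤ 4 → ∀ x ∈ Subgroup.closure (T : Set G), x ^ 3 = 1) :
    ∀ x : G, x ^ 3 = 1 := by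
  classical
  open Stmt9 in
  -- induction helper over the generating set
  have top_ind : ∀ (p : G → Prop), (∀ s ∈ S, p s) → p 1 →
      (∀ a b : G, p a → p b → p (a*b)) → (∀ a : G, p a → p a⁻¹) → ∀ g : G, p g := by
    intro p mem one mul inv g
    have hg : g ∈ Subgroup.closure (S : Set G) := by rw [hS]; trivial
    induction hg using Subgroup.closure_induction with
    | mem s hs => exact mem s hs
    | one => exact one
    | mul a b _ _ pa pb => exact mul a b pa pb
    | inv a _ pa => exact inv a pa
  -- local exponent-3 for subgroups generated by ≤ 4 elements of S
  have locexp : ∀ (T : Finset G), T ⊆ S → T.card ≤ 4 →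
      ∀ z : (Subgroup.closure (T : Set G)), z ^ 3 = 1 := by
    intro T hT hcard z
    apply Subtype.ext
    rw [SubgroupClass.coe_pow, OneMemClass.coe_one]
    exact h4 T hT hcard z z.2
  -- cubes of generators
  have loc1 : ∀ s ∈ S, s ^ 3 = 1 := by
    intro s hs
    refine h4 ({s} : Finset G) (by simpa using hs) (by simp) s ?_
    exact Subgroup.subset_closure (by simp)
  -- local gamma4 identity at generators
  have loc4 : ∀ s ∈ S, ∀ t ∈ S, ∀ u ∈ S, ∀ v ∈ S, ⁅⁅⁅s,t⁆,u⁆,v⁆ = (1:G) := by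
    intro s hs t ht u hu v hv
    set T : Finset G := insert s (insert t (insert u {v})) with hT
    have hTS : T ⊆ S := by
      intro a ha
      simp only [hT, Finset.mem_insert, Finset.mem_singleton] at ha
      rcases ha with rfl|rfl|rfl|rfl <;> assumption
    have hcard : T.card ≤ 4 := by
      have c1 := Finset.card_insert_le s (insert t (insert u ({v} : Finset G)))
      have c2 := Finset.card_insert_le t (insert u ({v} : Finset G))
      have c3 := Finset.card_insert_le u ({v} : Finset G)
      have c4 : ({v} : Finset G).card = 1 := Finset.card_singleton v
      rw [hT]
      omega
    have hmem : ∀ a ∈ T, a ∈ Subgroup.closure (T : Set G) :=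
      fun a ha => Subgroup.subset_closure (by exact_mod_cast ha)
    have hres := gamma4 (locexp T hTS hcard)
      ⟨s, hmem s (by simp [hT])⟩ ⟨t, hmem t (by simp [hT])⟩
      ⟨u, hmem u (by simp [hT])⟩ ⟨v, hmem v (by simp [hT])⟩
    have := congrArg (Subtype.val) hres
    simpa [commutatorElement_def] using this
  -- local symmetry identity at generators
  have loc_sym : ∀ s ∈ S, ∀ t ∈ S, ∀ u ∈ S, ⁅⁅s,t⁆,u⁆ * ⁅⁅u,t⁆,s⁆ = (1:G) := by
    intro s hs t ht u hu
    set T : Finset G := insert s (insert t ({u} : Finset G)) with hT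
    have hTS : T ⊆ S := by
      intro a ha
      simp only [hT, Finset.mem_insert, Finset.mem_singleton] at ha
      rcases ha with rfl|rfl|rfl <;> assumption
    have hcard : T.card ≤ 4 := by
      have c1 := Finset.card_insert_le s (insert t ({u} : Finset G))
      have c2 := Finset.card_insert_le t ({u} : Finset G)
      have c4 : ({u} : Finset G).card = 1 := Finset.card_singleton u
      rw [hT]
      omega
    have hmem : ∀ a ∈ T, a ∈ Subgroup.closure (T : Set G) :=
      fun a ha => Subgroup.subset_closure (by exact_mod_cast ha)
    have hres := symT (locexp T hTS hcard)
      ⟨s, hmem s (by simp [hT])⟩ ⟨t, hmem t (by simp [hT])⟩ ⟨u, hmem u (by simp [hT])⟩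
    have := congrArg (Subtype.val) hres
    simpa [commutatorElement_def] using this
  -- local 2-Engel at generators
  have loc_engel : ∀ s ∈ S, ∀ t ∈ S, ⁅⁅s,t⁆,s⁆ = (1:G) := by
    intro s hs t ht
    set T : Finset G := insert s ({t} : Finset G) with hT
    have hTS : T ⊆ S := by
      intro a ha
      simp only [hT, Finset.mem_insert, Finset.mem_singleton] at ha
      rcases ha with rfl|rfl <;> assumption
    have hcard : T.card ≤ 4 := by
      have c1 := Finset.card_insert_le s ({t} : Finset G)
      have c4 : ({t} : Finset G).card = 1 := Finset.card_singleton t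
      rw [hT]
      omega
    have hmem : ∀ a ∈ T, a ∈ Subgroup.closure (T : Set G) :=
      fun a ha => Subgroup.subset_closure (by exact_mod_cast ha)
    have hres : ⁅⁅(⟨s, hmem s (by simp [hT])⟩ : Subgroup.closure (T : Set G)),
        (⟨t, hmem t (by simp [hT])⟩ : Subgroup.closure (T : Set G))⁆,
        (⟨s, hmem s (by simp [hT])⟩ : Subgroup.closure (T : Set G))⁆ = 1 :=
      commutatorElement_eq_one_iff_commute.mpr
        (engel (locexp T hTS hcard) _ _).symm
    have := congrArg (Subtype.val) hres
    simpa [commutatorElement_def] using this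
  -- ==== globalize centrality of triple commutators ====
  have step1 : ∀ s ∈ S, ∀ t ∈ S, ∀ u ∈ S, ∀ d : G, Commute ⁅⁅s,t⁆,u⁆ d := by
    intro s hs t ht u hu
    refine top_ind _ ?_ ?_ ?_ ?_
    · intro v hv
      exact commutatorElement_eq_one_iff_commute.mp (loc4 s hs t ht u hu v hv)
    · exact Commute.one_right _
    · intro a b pa pb; exact pa.mul_right pb
    · intro a pa; exact pa.inv_right
  have step2 : ∀ s ∈ S, ∀ t ∈ S, ∀ u d : G, Commute ⁅⁅s,t⁆,u⁆ d := by
    intro s hs t ht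
    refine top_ind (fun u => ∀ d, Commute ⁅⁅s,t⁆,u⁆ d) ?_ ?_ ?_ ?_
    · exact step1 s hs t ht
    · intro d; rw [commutatorElement_one_right]; exact Commute.one_left d
    · intro a b pa pb d
      rw [gid2]
      exact (pa d).mul_left (commAll_conj pb a d)
    · intro a pa d
      rw [gid4]
      have h1 : ∀ (d' : G), Commute ⁅a,⁅s,t⁆⁆ d' := by
        intro d'
        have e2 : ⁅a,⁅s,t⁆⁆ = ⁅⁅s,t⁆,a⁆⁻¹ := (commutatorElement_inv ⁅s,t⁆ a).symm
        rw [e2]; exact (pa d').inv_left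
      exact commAll_conj' h1 a d
  have step3 : ∀ s ∈ S, ∀ t u d : G, Commute ⁅⁅s,t⁆,u⁆ d := by
    intro s hs
    refine top_ind (fun t => ∀ u d, Commute ⁅⁅s,t⁆,u⁆ d) ?_ ?_ ?_ ?_
    · exact step2 s hs
    · intro u d
      rw [commutatorElement_one_right, commutatorElement_one_left]
      exact Commute.one_left d
    · intro a b pa pb u d
      rw [gid2, gid1, gid5]
      have hY : ∀ (d' : G), Commute (a * ⁅⁅s,b⁆, a⁻¹*u*a⁆ * a⁻¹) d' := commAll_conj (pb _) a
      exact (commAll_conj hY ⁅s,a⁆ d).mul_left (pa u d)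
    · intro a pa u d
      rw [gid4, gid5']
      have hX : ∀ (z d' : G), Commute ⁅⁅a,s⁆, z⁆ d' := by
        intro z d'
        have e : ⁅a,s⁆ = ⁅s,a⁆⁻¹ := (commutatorElement_inv s a).symm
        rw [e, gid3]
        have h1 : ∀ (d'' : G), Commute ⁅z,⁅s,a⁆⁆ d'' := by
          intro d''
          have e2 : ⁅z,⁅s,a⁆⁆ = ⁅⁅s,a⁆,z⁆⁻¹ := (commutatorElement_inv ⁅s,a⁆ z).symm
          rw [e2]; exact (pa z d'').inv_left
        exact commAll_conj' h1 ⁅s,a⁆ d'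
      exact commAll_conj' (hX (a*u*a⁻¹)) a d
  have hc : ∀ a b c d : G, Commute ⁅⁅a,b⁆,c⁆ d := by
    refine top_ind (fun s => ∀ t u d, Commute ⁅⁅s,t⁆,u⁆ d) ?_ ?_ ?_ ?_
    · exact step3
    · intro t u d
      rw [commutatorElement_one_left, commutatorElement_one_left]
      exact Commute.one_left d
    · intro a b pa pb t u d
      rw [gid1, gid1, gid5]
      have hP : ∀ (d' : G), Commute (a * ⁅⁅b,t⁆, a⁻¹*u*a⁆ * a⁻¹) d' := commAll_conj (pb t _) a
      exact (commAll_conj (pa t u) _ d).mul_left (hP d)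
    · intro a pa t u d
      rw [gid3, gid5']
      have h1 : ∀ (z d' : G), Commute ⁅⁅t,a⁆,z⁆ d' := by
        intro z d'
        have e : ⁅t,a⁆ = ⁅a,t⁆⁻¹ := (commutatorElement_inv a t).symm
        rw [e, gid3]
        have h2 : ∀ (d'' : G), Commute ⁅z,⁅a,t⁆⁆ d'' := by
          intro d''
          have e2 : ⁅z,⁅a,t⁆⁆ = ⁅⁅a,t⁆,z⁆⁻¹ := (commutatorElement_inv ⁅a,t⁆ z).symm
          rw [e2]; exact (pa t z d'').inv_left
        exact commAll_conj' h2 ⁅a,t⁆ d'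
      exact commAll_conj' (h1 (a*u*a⁻¹)) a d
  -- ==== globalize the symmetry identity ====
  have L1 : ∀ s ∈ S, ∀ u ∈ S, ∀ y : G, ⁅⁅s,y⁆,u⁆ * ⁅⁅u,y⁆,s⁆ = 1 := by
    intro s hs u hu
    refine top_ind (fun y => ⁅⁅s,y⁆,u⁆ * ⁅⁅u,y⁆,s⁆ = 1) ?_ ?_ ?_ ?_
    · intro t ht; exact loc_sym s hs t ht u hu
    · simp [commutatorElement_one_right, commutatorElement_one_left]
    · intro a b pa pb
      rw [Tmul2 hc, Tmul2 hc]
      exact central_pair_mul (hc s b u) pa pb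
    · intro a pa
      rw [Tinv2 hc, Tinv2 hc]
      have hY : ⁅⁅u,a⁆,s⁆ = ⁅⁅s,a⁆,u⁆⁻¹ := eq_inv_of_mul_eq_one_right pa
      rw [hY, inv_inv, inv_mul_cancel]
  have L2 : ∀ s ∈ S, ∀ z y : G, ⁅⁅s,y⁆,z⁆ * ⁅⁅z,y⁆,s⁆ = 1 := by
    intro s hs
    refine top_ind (fun z => ∀ y, ⁅⁅s,y⁆,z⁆ * ⁅⁅z,y⁆,s⁆ = 1) ?_ ?_ ?_ ?_
    · intro u hu y; exact L1 s hs u hu y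
    · intro y; simp [commutatorElement_one_right, commutatorElement_one_left]
    · intro a b pa pb y
      rw [Tmul3 hc, Tmul1 hc]
      exact central_pair_mul (hc s y b) (pa y) (pb y)
    · intro a pa y
      rw [Tinv3 hc, Tinv1 hc]
      have hY : ⁅⁅a,y⁆,s⁆ = ⁅⁅s,y⁆,a⁆⁻¹ := eq_inv_of_mul_eq_one_right (pa y)
      rw [hY, inv_inv, inv_mul_cancel]
  have L3 : ∀ x z y : G, ⁅⁅x,y⁆,z⁆ * ⁅⁅z,y⁆,x⁆ = 1 := by
    refine top_ind (fun x => ∀ z y, ⁅⁅x,y⁆,z⁆ * ⁅⁅z,y⁆,x⁆ = 1) ?_ ?_ ?_ ?_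
    · intro s hs z y; exact L2 s hs z y
    · intro z y; simp [commutatorElement_one_right, commutatorElement_one_left]
    · intro a b pa pb z y
      rw [Tmul1 hc, Tmul3 hc]
      exact central_pair_mul (hc b y z) (pa z y) (pb z y)
    · intro a pa z y
      rw [Tinv1 hc, Tinv3 hc]
      have hY : ⁅⁅z,y⁆,a⁆ = ⁅⁅a,y⁆,z⁆⁻¹ := eq_inv_of_mul_eq_one_right (pa z y)
      rw [hY, inv_inv, inv_mul_cancel]
  -- ==== global 2-Engel ====
  have Ebase : ∀ s ∈ S, ∀ y : G, ⁅⁅s,y⁆,s⁆ = 1 := by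
    intro s hs
    refine top_ind (fun y => ⁅⁅s,y⁆,s⁆ = 1) ?_ ?_ ?_ ?_
    · intro t ht; exact loc_engel s hs t ht
    · simp [commutatorElement_one_right, commutatorElement_one_left]
    · intro a b pa pb
      rw [Tmul2 hc, pa, pb, one_mul]
    · intro a pa
      rw [Tinv2 hc, pa, inv_one]
  have E2 : ∀ x y : G, ⁅⁅x,y⁆,x⁆ = 1 := by
    refine top_ind (fun x => ∀ y, ⁅⁅x,y⁆,x⁆ = 1) ?_ ?_ ?_ ?_
    · exact Ebase
    · intro y; simp [commutatorElement_one_left]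
    · intro a b pa pb y
      rw [Tmul1 hc, Tmul3 hc, Tmul3 hc, pa y, pb y, one_mul, mul_one]
      exact L3 a b y
    · intro a pa y
      rw [Tinv1 hc, Tinv3 hc, pa y, inv_one, inv_one]
  have E2' : ∀ x y : G, ⁅⁅x,y⁆,y⁆ = 1 := by
    intro x y
    rw [Tswap hc, E2 y x, inv_one]
  -- ==== cube of commutators ====
  have comm_cube : ∀ g h : G, g ^ 3 = 1 → ⁅g,h⁆ ^ 3 = 1 := by
    intro g h hg
    have hcomm : Commute ⁅g,h⁆ g := commutatorElement_eq_one_iff_commute.mp (E2 g h)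
    have hconj : g * ⁅g,h⁆ * g⁻¹ = ⁅g,h⁆ := by
      rw [hcomm.symm.eq, mul_assoc, mul_inv_cancel, mul_one]
    have e1 : ⁅g*g, h⁆ = ⁅g,h⁆ * ⁅g,h⁆ := by
      rw [gid1, hconj]
    have hcgg : Commute ⁅g,h⁆ (g*g) := hcomm.mul_right hcomm
    have hconj2 : (g*g) * ⁅g,h⁆ * (g*g)⁻¹ = ⁅g,h⁆ := by
      rw [hcgg.symm.eq, mul_assoc, mul_inv_cancel, mul_one]
    have e2 : ⁅g*g*g, h⁆ = ⁅g,h⁆*⁅g,h⁆*⁅g,h⁆ := by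
      rw [gid1, e1, hconj2, ← mul_assoc]
    have e3 : g*g*g = 1 := by rw [← epow]; exact hg
    rw [epow, ← e2, e3, commutatorElement_one_left]
  -- ==== cube of a product ====
  have cube_step : ∀ y s : G, y ^ 3 = 1 → s ^ 3 = 1 → (s*y) ^ 3 = 1 := by
    intro y s hy hs3
    have hcy : Commute ⁅y,s⁆ y := commutatorElement_eq_one_iff_commute.mp (E2 y s)
    have hcs : Commute ⁅y,s⁆ s := commutatorElement_eq_one_iff_commute.mp (E2' y s)
    have hc3 : ⁅y,s⁆ ^ 3 = 1 := comm_cube y s hy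
    have hys : y*s = ⁅y,s⁆*(s*y) := by
      simp only [commutatorElement_def]; group
    have hcsy : Commute ⁅y,s⁆ (s*y) := hcs.mul_right hcy
    have final : (s*y) ^ 3 = ⁅y,s⁆^3 * (s^3 * y^3) := by
      calc (s*y)^3 = s*((y*s)*((y*s)*y)) := by rw [epow]; group
        _ = s*((⁅y,s⁆*(s*y))*((⁅y,s⁆*(s*y))*y)) := by rw [hys]
        _ = (s*⁅y,s⁆)*((s*y)*(⁅y,s⁆*((s*y)*y))) := by group
        _ = (s*⁅y,s⁆)*(((s*y)*⁅y,s⁆)*((s*y)*y)) := by group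
        _ = (s*⁅y,s⁆)*((⁅y,s⁆*(s*y))*((s*y)*y)) := by rw [hcsy.symm.eq]
        _ = (s*(⁅y,s⁆*⁅y,s⁆))*((s*y)*((s*y)*y)) := by group
        _ = (⁅y,s⁆*⁅y,s⁆)*(s*((s*y)*((s*y)*y))) := by
            rw [← (hcs.mul_left hcs).eq]; group
        _ = (⁅y,s⁆*⁅y,s⁆)*((s*s)*((y*s)*(y*y))) := by group
        _ = (⁅y,s⁆*⁅y,s⁆)*((s*s)*((⁅y,s⁆*(s*y))*(y*y))) := by rw [hys]
        _ = (⁅y,s⁆*⁅y,s⁆)*(((s*s)*⁅y,s⁆)*((s*y)*(y*y))) := by group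
        _ = (⁅y,s⁆*⁅y,s⁆)*((⁅y,s⁆*(s*s))*((s*y)*(y*y))) := by
            rw [(hcs.symm.mul_left hcs.symm).eq]
        _ = (⁅y,s⁆*(⁅y,s⁆*⁅y,s⁆))*((s*(s*s))*(y*(y*y))) := by group
        _ = ⁅y,s⁆^3*(s^3*y^3) := by rw [epow, epow, epow]; group
    rw [final, hc3, hs3, hy, one_mul, one_mul]
  -- ==== conclusion ====
  refine top_ind (fun x => x ^ 3 = 1) loc1 (one_pow 3) ?_ ?_
  · intro a b pa pb; exact cube_step b a pb pa
  · intro a pa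
    rw [inv_pow, pa, inv_one]
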